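/- Let (Σ,M) be an OP alphabet, K a semiring, S:(Σ,M)^+→K a regular (respectively strictly regular) series, and L⊆(Σ,M)^+ an operator precedence language. Then the series S∩L, defined by (S∩L)(w)=S(w) if w∈L and (S∩L)(w)=0 otherwise, is regular (respectively strictly regular). -/

import Mathlib

namespace WOP

/-- Precedence relations: yields precedence, equal in precedence, takes precedence. -/
inductive PrecRel where
  | lt | eq | gt
deriving DecidableEq

/-- An operator precedence matrix on `Σ ∪ {#}`, where `none` encodes `#`.
It assigns at most one precedence relation to each ordered pair, with
`# ⋖ a` and `a ⋗ #` for every letter `a`. -/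
structure OPM (A : Type) where
  rel : Option A → Option A → Option PrecRel
  hash_lt : ∀ a : A, rel none (some a) = some .lt
  hash_gt : ∀ a : A, rel (some a) none = some .gt

variable {A B K : Type}

/-- The letter of `#w#` at position `i` (positions `0` and `> |w|` carry `#`, i.e. `none`). -/
def letterAt (w : List A) (i : ℕ) : Option A :=
  if i = 0 then none else w[i - 1]?

section ChainRel

variable (M : OPM A) (L : ℕ → Option A)

mutual
  /-- `ChainMid M L k j`: there are `k = k_s < ... < k_m = j` with
  `L k_s ≐ L k_{s+1} ≐ ... ≐ L k_{m-1} ⋗ L k_m` and the gap condition between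
  consecutive elements. -/
  inductive ChainMid : ℕ → ℕ → Prop where
    | last {k j : ℕ} : M.rel (L k) (L j) = some .gt → ChainGap k j → ChainMid k j
    | step {k k' j : ℕ} : M.rel (L k) (L k') = some .eq → ChainGap k k' →
        ChainMid k' j → ChainMid k j

  /-- The gap condition between consecutive elements of a chain:
  adjacent positions or a chain. -/
  inductive ChainGap : ℕ → ℕ → Prop where
    | adj (k : ℕ) : ChainGap k (k + 1)
    | chain {k k' : ℕ} : Chain k k' → ChainGap k k'

  /-- The chain relation `i ⤳ j`: there are positions `i = k_1 < ... < k_m = j` with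
  `L k_1 ⋖ L k_2 ≐ ... ≐ L k_{m-1} ⋗ L k_m` such that consecutive `k`'s are adjacent
  or themselves related by `⤳`. -/
  inductive Chain : ℕ → ℕ → Prop where
    | mk {i k j : ℕ} : M.rel (L i) (L k) = some .lt → ChainGap i k → ChainMid k j →
        Chain i j
end

end ChainRel

/-- `(Σ,M)^+`: the set of nonempty words compatible with `M`, i.e. `0 ⤳ |w|+1` in `#w#`. -/
def OPWords (M : OPM A) : Set (List A) :=
  {w | w ≠ [] ∧ Chain M (letterAt w) 0 (w.length + 1)}

/-- An (unweighted) operator precedence automaton over the alphabet `A`. -/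
structure OPA (A : Type) where
  Q : Type
  fin : Fintype Q
  I : Set Q
  F : Set Q
  δpush : Set (Q × A × Q)
  δshift : Set (Q × A × Q)
  δpop : Set (Q × Q × Q)

/-- A weighted operator precedence automaton over the alphabet `A` and weights in `K`. -/
structure WOPA (A K : Type) extends OPA A where
  wtpush : Q × A × Q → K
  wtshift : Q × A × Q → K
  wtpop : Q × Q × Q → K

/-- A configuration: a stack of (symbol, state) pairs, a current state,
and the remaining input. -/
structure Config (A Q : Type) where
  stack : List (A × Q)
  state : Q
  input : List A

/-- The moves (transitions) an OPA may take. -/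
inductive Move (A Q : Type) where
  | push (q : Q) (b : A) (r : Q)
  | shift (q : Q) (b : A) (r : Q)
  | pop (q p r : Q)

/-- The topmost stack symbol (`none` = `#` for the empty stack). -/
def topSym {Q : Type} (st : List (A × Q)) : Option A := st.head?.map Prod.fst

/-- One step of an OPA on an OP alphabet `(A, M)`. -/
inductive Exec (M : OPM A) (T : OPA A) : Config A T.Q → Move A T.Q → Config A T.Q → Prop where
  | push {st : List (A × T.Q)} {q r : T.Q} {b : A} {x : List A} :
      M.rel (topSym st) (some b) = some .lt → (q, b, r) ∈ T.δpush →
      Exec M T ⟨st, q, b :: x⟩ (.push q b r) ⟨(b, q) :: st, r, x⟩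
  | shift {st : List (A × T.Q)} {p q r : T.Q} {a b : A} {x : List A} :
      M.rel (some a) (some b) = some .eq → (q, b, r) ∈ T.δshift →
      Exec M T ⟨(a, p) :: st, q, b :: x⟩ (.shift q b r) ⟨(b, p) :: st, r, x⟩
  | pop {st : List (A × T.Q)} {p q r : T.Q} {a : A} {x : List A} :
      M.rel (some a) x.head? = some .gt → (q, p, r) ∈ T.δpop →
      Exec M T ⟨(a, p) :: st, q, x⟩ (.pop q p r) ⟨st, r, x⟩

/-- Execution of a sequence of moves. -/
inductive ExecList (M : OPM A) (T : OPA A) :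
    Config A T.Q → List (Move A T.Q) → Config A T.Q → Prop where
  | nil (c : Config A T.Q) : ExecList M T c [] c
  | cons {c c' c'' : Config A T.Q} {m : Move A T.Q} {ms : List (Move A T.Q)} :
      Exec M T c m c' → ExecList M T c' ms c'' → ExecList M T c (m :: ms) c''

/-- The weight of a move of a weighted OPA. -/
def moveWt [Semiring K] (W : WOPA A K) : Move A W.Q → K
  | .push q b r => W.wtpush (q, b, r)
  | .shift q b r => W.wtshift (q, b, r)
  | .pop q p r => W.wtpop (q, p, r)

/-- The accepting runs of an OPA on `w`: an initial state, a sequence of moves from the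
initial configuration (empty stack, whole input) to a final configuration
(empty stack, input read), and the final state reached. -/
def AccRuns (M : OPM A) (T : OPA A) (w : List A) : Set (T.Q × List (Move A T.Q) × T.Q) :=
  {ρ | ρ.1 ∈ T.I ∧ ρ.2.2 ∈ T.F ∧ ExecList M T ⟨[], ρ.1, w⟩ ρ.2.1 ⟨[], ρ.2.2, []⟩}

/-- The behavior `⟦W⟧(w)`: the sum over all accepting runs of `W` on `w` of the product
(in order) of the weights of the moves of the run. -/
noncomputable def behavior [Semiring K] (M : OPM A) (W : WOPA A K) (w : List A) : K :=
  ∑ᶠ ρ ∈ AccRuns M W.toOPA w, (ρ.2.1.map (moveWt W)).prod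

/-- A weighted OPA is restricted (an rwOPA) if all pop weights are `1`. -/
def Restricted [Semiring K] (W : WOPA A K) : Prop := ∀ t ∈ W.δpop, W.wtpop t = 1

/-- A series `S : (Σ,M)^+ → K` is regular if it is the behavior of some wOPA. -/
def Regular [Semiring K] (M : OPM A) (S : List A → K) : Prop :=
  ∃ W : WOPA A K, ∀ w ∈ OPWords M, S w = behavior M W w

/-- A series is strictly regular if it is the behavior of some restricted wOPA. -/
def StrictlyRegular [Semiring K] (M : OPM A) (S : List A → K) : Prop :=
  ∃ W : WOPA A K, Restricted W ∧ ∀ w ∈ OPWords M, S w = behavior M W w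

/-- Unweighted acceptance. -/
def Accepts (M : OPM A) (T : OPA A) (w : List A) : Prop :=
  ∃ qI ms qF, qI ∈ T.I ∧ qF ∈ T.F ∧ ExecList M T ⟨[], qI, w⟩ ms ⟨[], qF, []⟩

/-- A language `L ⊆ (Σ,M)^+` is an operator precedence language if it is the set of
compatible words accepted by some OPA. -/
def IsOPL (M : OPM A) (L : Set (List A)) : Prop :=
  ∃ T : OPA A, L = {w | w ∈ OPWords M ∧ Accepts M T w}

/-- The intersection `S ∩ L` of a series with a language. -/
noncomputable def interSeries [Semiring K] (S : List A → K) (L : Set (List A))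
    (w : List A) : K :=
  open Classical in if w ∈ L then S w else 0

/-- `h : Σ → Γ` is OPM-preserving: `a ⊙ b` iff `h(a) ⊙ h(b)` for every relation `⊙`. -/
def OPMPreserving (M : OPM A) (M' : OPM B) (h : A → B) : Prop :=
  ∀ a b : A, M.rel (some a) (some b) = M'.rel (some (h a)) (some (h b))

/-- The image series `h(S)(v) = ∑_{w ∈ (Σ,M)^+, h(w) = v} S(w)`. -/
noncomputable def mapSeries [Semiring K] (M : OPM A) (h : A → B) (S : List A → K)
    (v : List B) : K :=
  ∑ᶠ w ∈ {w | w ∈ OPWords M ∧ w.map h = v}, S w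

/-- The pullback OPM `h⁻¹(M)` along `h : Σ' → Σ`. -/
def pullOPM (M : OPM A) (h : B → A) : OPM B where
  rel o₁ o₂ := M.rel (o₁.map h) (o₂.map h)
  hash_lt b := M.hash_lt (h b)
  hash_gt b := M.hash_gt (h b)

/-- The Nivat class `N(Σ,M,K)`: series obtained from a one-state restricted wOPA over a
pulled-back OP alphabet, intersected with an OPL, followed by the projection. -/
def NivatClass [Semiring K] (M : OPM A) (S : List A → K) : Prop :=
  ∃ (B : Type) (_ : Fintype B) (h : B → A) (W : WOPA B K) (L : Set (List B)),
    Restricted W ∧ (∃ q₀ : W.Q, ∀ q : W.Q, q = q₀) ∧ IsOPL (pullOPM M h) L ∧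
    ∀ v ∈ OPWords M,
      S v = mapSeries (pullOPM M h) h (interSeries (behavior (pullOPM M h) W) L) v

/-- An OPL step function: a finite sum `∑ kᵢ · 1_{Lᵢ}` with the `Lᵢ` OPLs forming a
partition of `(Σ,M)^+`. -/
def IsOPLStep [Semiring K] (M : OPM A) (S : List A → K) : Prop :=
  ∃ (n : ℕ) (k : Fin n → K) (L : Fin n → Set (List A)),
    (∀ i, IsOPL M (L i)) ∧ (∀ i j, i ≠ j → Disjoint (L i) (L j)) ∧
    (⋃ i, L i) = OPWords M ∧ ∀ i, ∀ w ∈ L i, S w = k i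



section Closure

variable {A K : Type}

/-! ### Generic lemmas about executions -/

theorem topSym_eq {Q : Type} (st : List (A × Q)) :
    topSym st = (st.map Prod.fst).head? := by cases st <;> rfl

theorem execList_append {M : OPM A} {T : OPA A} {c c' c'' : Config A T.Q}
    {ms ms' : List (Move A T.Q)} (h : ExecList M T c ms c')
    (h' : ExecList M T c' ms' c'') : ExecList M T c (ms ++ ms') c'' := by
  induction h with
  | nil => exact h'
  | cons hstep _ ih => exact .cons hstep (ih h')

/-- Strict lexicographic decrease of (input length, stack length). -/
def cLT {Q : Type} (c' c : Config A Q) : Prop :=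
  c'.input.length < c.input.length ∨
    (c'.input.length = c.input.length ∧ c'.stack.length < c.stack.length)

theorem exec_cLT {M : OPM A} {T : OPA A} {c c' : Config A T.Q} {m : Move A T.Q}
    (h : Exec M T c m c') : cLT c' c := by
  cases h with
  | push _ _ => left; simp
  | shift _ _ => left; simp
  | pop _ _ => right; simp

theorem cLT_trans {Q : Type} {c₁ c₂ c₃ : Config A Q} (h : cLT c₁ c₂) (h' : cLT c₂ c₃) :
    cLT c₁ c₃ := by
  rcases h with h | ⟨h, h2⟩ <;> rcases h' with h' | ⟨h', h2'⟩ <;>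
    [left; left; left; right] <;> omega

theorem execList_cLT {M : OPM A} {T : OPA A} {c c' : Config A T.Q}
    {ms : List (Move A T.Q)} (h : ExecList M T c ms c') : ms = [] ∨ cLT c' c := by
  induction h with
  | nil => exact .inl rfl
  | cons hstep h' ih =>
    refine .inr ?_
    rcases ih with rfl | hlt
    · cases h'; exact exec_cLT hstep
    · exact cLT_trans hlt (exec_cLT hstep)

theorem execList_nil_of_shape {M : OPM A} {T : OPA A} {c c' : Config A T.Q}
    {ms : List (Move A T.Q)} (h : ExecList M T c ms c')
    (hin : c'.input.length = c.input.length) (hst : c'.stack.length = c.stack.length) :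
    ms = [] := by
  rcases execList_cLT h with rfl | hlt
  · rfl
  · rcases hlt with h1 | ⟨h1, h2⟩ <;> omega

/-! ### Products of OPAs -/

/-- First projection of a move over a product state set. -/
def mproj₁ {Q₁ Q₂ : Type} : Move A (Q₁ × Q₂) → Move A Q₁
  | .push q b r => .push q.1 b r.1
  | .shift q b r => .shift q.1 b r.1
  | .pop q p r => .pop q.1 p.1 r.1

/-- Second projection of a move over a product state set. -/
def mproj₂ {Q₁ Q₂ : Type} : Move A (Q₁ × Q₂) → Move A Q₂
  | .push q b r => .push q.2 b r.2
  | .shift q b r => .shift q.2 b r.2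
  | .pop q p r => .pop q.2 p.2 r.2

/-- Projections of configurations. -/
def cproj₁ {Q₁ Q₂ : Type} (c : Config A (Q₁ × Q₂)) : Config A Q₁ :=
  ⟨c.stack.map fun x => (x.1, x.2.1), c.state.1, c.input⟩

def cproj₂ {Q₁ Q₂ : Type} (c : Config A (Q₁ × Q₂)) : Config A Q₂ :=
  ⟨c.stack.map fun x => (x.1, x.2.2), c.state.2, c.input⟩

/-- The product of two OPAs. -/
@[reducible]
def prodOPA (T₁ T₂ : OPA A) : OPA A where
  Q := T₁.Q × T₂.Q
  fin := by haveI := T₁.fin; haveI := T₂.fin; infer_instance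
  I := {q | q.1 ∈ T₁.I ∧ q.2 ∈ T₂.I}
  F := {q | q.1 ∈ T₁.F ∧ q.2 ∈ T₂.F}
  δpush := {t | (t.1.1, t.2.1, t.2.2.1) ∈ T₁.δpush ∧ (t.1.2, t.2.1, t.2.2.2) ∈ T₂.δpush}
  δshift := {t | (t.1.1, t.2.1, t.2.2.1) ∈ T₁.δshift ∧ (t.1.2, t.2.1, t.2.2.2) ∈ T₂.δshift}
  δpop := {t | (t.1.1, t.2.1.1, t.2.2.1) ∈ T₁.δpop ∧ (t.1.2, t.2.1.2, t.2.2.2) ∈ T₂.δpop}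

theorem topSym_map_proj {Q₁ Q₂ Q₃ : Type} (f : Q₁ → Q₂) (g : Q₁ → Q₃)
    (st : List (A × Q₁)) :
    topSym ((st.map fun x => (x.1, f x.2)) : List (A × Q₂))
      = topSym ((st.map fun x => (x.1, g x.2)) : List (A × Q₃)) := by
  cases st <;> rfl

theorem exec_proj₁ {M : OPM A} {T₁ T₂ : OPA A} {c c' : Config A (prodOPA T₁ T₂).Q}
    {m : Move A (prodOPA T₁ T₂).Q} (h : Exec M (prodOPA T₁ T₂) c m c') :
    Exec M T₁ (cproj₁ c) (mproj₁ m) (cproj₁ c') := by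
  cases h with
  | push hrel hδ =>
    refine Exec.push ?_ hδ.1
    rw [topSym_eq] at hrel ⊢
    simpa [Function.comp_def] using hrel
  | shift hrel hδ => exact Exec.shift hrel hδ.1
  | pop hrel hδ => exact Exec.pop hrel hδ.1

theorem exec_proj₂ {M : OPM A} {T₁ T₂ : OPA A} {c c' : Config A (prodOPA T₁ T₂).Q}
    {m : Move A (prodOPA T₁ T₂).Q} (h : Exec M (prodOPA T₁ T₂) c m c') :
    Exec M T₂ (cproj₂ c) (mproj₂ m) (cproj₂ c') := by
  cases h with
  | push hrel hδ =>
    refine Exec.push ?_ hδ.2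
    rw [topSym_eq] at hrel ⊢
    simpa [Function.comp_def] using hrel
  | shift hrel hδ => exact Exec.shift hrel hδ.2
  | pop hrel hδ => exact Exec.pop hrel hδ.2

theorem execList_proj₁ {M : OPM A} {T₁ T₂ : OPA A} {c c' : Config A (prodOPA T₁ T₂).Q}
    {ms : List (Move A (prodOPA T₁ T₂).Q)} (h : ExecList M (prodOPA T₁ T₂) c ms c') :
    ExecList M T₁ (cproj₁ c) (ms.map mproj₁) (cproj₁ c') := by
  induction h with
  | nil => exact .nil _
  | cons hstep _ ih => exact .cons (exec_proj₁ hstep) ih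

theorem execList_proj₂ {M : OPM A} {T₁ T₂ : OPA A} {c c' : Config A (prodOPA T₁ T₂).Q}
    {ms : List (Move A (prodOPA T₁ T₂).Q)} (h : ExecList M (prodOPA T₁ T₂) c ms c') :
    ExecList M T₂ (cproj₂ c) (ms.map mproj₂) (cproj₂ c') := by
  induction h with
  | nil => exact .nil _
  | cons hstep _ ih => exact .cons (exec_proj₂ hstep) ih

/-- Zipping two stacks with identical symbol sequences. -/
def pairSt {Q₁ Q₂ : Type} : List (A × Q₁) → List (A × Q₂) → List (A × (Q₁ × Q₂))
  | (a, p) :: s₁, (_, q) :: s₂ => (a, (p, q)) :: pairSt s₁ s₂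
  | _, _ => []

theorem pairSt_fst {Q₁ Q₂ : Type} :
    ∀ {s₁ : List (A × Q₁)} {s₂ : List (A × Q₂)}, s₁.map Prod.fst = s₂.map Prod.fst →
      (pairSt s₁ s₂).map Prod.fst = s₁.map Prod.fst
  | [], [], _ => rfl
  | (a, p) :: s₁, (b, q) :: s₂, h => by
    simp only [List.map_cons, List.cons.injEq] at h
    simp [pairSt, pairSt_fst h.2]

theorem topSym_congr {Q₁ Q₂ : Type} {s₁ : List (A × Q₁)} {s₂ : List (A × Q₂)}
    (h : s₁.map Prod.fst = s₂.map Prod.fst) : topSym s₁ = topSym s₂ := by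
  rw [topSym_eq, topSym_eq, h]

/-- Two runs on inputs of the same shape can be zipped into a run of the product. -/
theorem pairing {M : OPM A} {T₁ T₂ : OPA A} {c₁ d₁ : Config A T₁.Q}
    {ms₁ : List (Move A T₁.Q)} (h1 : ExecList M T₁ c₁ ms₁ d₁) :
    ∀ {c₂ d₂ : Config A T₂.Q} {ms₂ : List (Move A T₂.Q)},
      ExecList M T₂ c₂ ms₂ d₂ →
      c₁.input = c₂.input → c₁.stack.map Prod.fst = c₂.stack.map Prod.fst →
      d₁.input = d₂.input → d₁.stack.map Prod.fst = d₂.stack.map Prod.fst →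
      ∃ ms : List (Move A (prodOPA T₁ T₂).Q),
        ExecList M (prodOPA T₁ T₂)
          ⟨pairSt c₁.stack c₂.stack, (c₁.state, c₂.state), c₁.input⟩ ms
          ⟨pairSt d₁.stack d₂.stack, (d₁.state, d₂.state), d₁.input⟩ ∧
        ms.map mproj₁ = ms₁ ∧ ms.map mproj₂ = ms₂ := by
  induction h1 with
  | nil c =>
    intro c₂ d₂ ms₂ h2 hin hst hin' hst'
    have hms₂ : ms₂ = [] := by
      refine execList_nil_of_shape h2 ?_ ?_
      · rw [← hin', ← hin]
      · have h₁ := congrArg List.length hst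
        have h₂ := congrArg List.length hst'
        simp only [List.length_map] at h₁ h₂
        omega
    subst hms₂
    cases h2
    exact ⟨[], .nil _, rfl, rfl⟩
  | cons hstep h' ih =>
    intro c₂ d₂ ms₂ h2 hin hst hin' hst'
    rename_i c c' d₁' m ms
    cases h2 with
    | nil =>
      exfalso
      have hnil : m :: ms = [] := by
        refine execList_nil_of_shape (.cons hstep h') ?_ ?_
        · rw [hin', ← hin]
        · have h₁ := congrArg List.length hst
          have h₂ := congrArg List.length hst'
          simp only [List.length_map] at h₁ h₂
          omega
      simp at hnil
    | cons hstep₂ h₂' =>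
      rename_i c₂' ms₂' m₂
      cases hstep with
      | push hrel hδ =>
        rename_i st q r b x
        cases hstep₂ with
        | push hrel₂ hδ₂ =>
          rename_i st₂ q₂ r₂ b₂ x₂
          obtain ⟨rfl, rfl⟩ : b = b₂ ∧ x = x₂ := by
            simpa using hin
          obtain ⟨ms', hex, hm1, hm2⟩ := ih h₂' rfl (by simpa using hst) hin' hst'
          refine ⟨.push (q, q₂) b (r, r₂) :: ms', ?_, by simp [hm1, mproj₁],
            by simp [hm2, mproj₂]⟩
          refine .cons (Exec.push ?_ ⟨hδ, hδ₂⟩) hex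
          rwa [topSym_congr (pairSt_fst hst)]
        | shift hrel₂ hδ₂ =>
          exfalso
          rename_i st₂ p₂ q₂ r₂ a₂ b₂ x₂
          obtain ⟨rfl, rfl⟩ : b = b₂ ∧ x = x₂ := by simpa using hin
          have : topSym st = some a₂ := by
            rw [topSym_eq, hst]; rfl
          rw [this] at hrel
          rw [hrel₂] at hrel
          simp at hrel
        | pop hrel₂ hδ₂ =>
          exfalso
          rename_i st₂ p₂ q₂ r₂ a₂ x₂
          have hx : (b :: x : List A) = x₂ := hin
          have : topSym st = some a₂ := by
            rw [topSym_eq, hst]; rfl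
          rw [this] at hrel
          rw [← hx] at hrel₂
          simp only [List.head?] at hrel₂
          rw [hrel₂] at hrel
          simp at hrel
      | shift hrel hδ =>
        rename_i st p q r a b x
        cases hstep₂ with
        | push hrel₂ hδ₂ =>
          exfalso
          rename_i st₂ q₂ r₂ b₂ x₂
          obtain ⟨rfl, rfl⟩ : b = b₂ ∧ x = x₂ := by simpa using hin
          have htop : topSym st₂ = some a := by
            rw [topSym_eq, ← hst]; rfl
          rw [htop] at hrel₂
          rw [hrel₂] at hrel
          simp at hrel
        | shift hrel₂ hδ₂ =>
          rename_i st₂ p₂ q₂ r₂ a₂ b₂ x₂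
          obtain ⟨rfl, rfl⟩ : b = b₂ ∧ x = x₂ := by simpa using hin
          obtain ⟨rfl, hst''⟩ : a = a₂ ∧ st.map Prod.fst = st₂.map Prod.fst := by
            simpa using hst
          obtain ⟨ms', hex, hm1, hm2⟩ := ih h₂' rfl (by simpa using hst'') hin' hst'
          refine ⟨.shift (q, q₂) b (r, r₂) :: ms', ?_, by simp [hm1, mproj₁],
            by simp [hm2, mproj₂]⟩
          exact .cons (Exec.shift hrel ⟨hδ, hδ₂⟩) hex
        | pop hrel₂ hδ₂ =>
          exfalso
          rename_i st₂ p₂ q₂ r₂ a₂ x₂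
          have hx : (b :: x : List A) = x₂ := hin
          obtain ⟨rfl, -⟩ : a = a₂ ∧ st.map Prod.fst = st₂.map Prod.fst := by
            simpa using hst
          rw [← hx] at hrel₂
          simp only [List.head?] at hrel₂
          rw [hrel₂] at hrel
          simp at hrel
      | pop hrel hδ =>
        rename_i st p q r a x
        cases hstep₂ with
        | push hrel₂ hδ₂ =>
          exfalso
          rename_i st₂ q₂ r₂ b₂ x₂
          have hx : x = (b₂ :: x₂ : List A) := hin
          have : topSym st₂ = some a := by
            rw [topSym_eq, ← hst]; rfl
          rw [this] at hrel₂
          rw [hx] at hrel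
          simp only [List.head?] at hrel
          rw [hrel₂] at hrel
          simp at hrel
        | shift hrel₂ hδ₂ =>
          exfalso
          rename_i st₂ p₂ q₂ r₂ a₂ b₂ x₂
          have hx : x = (b₂ :: x₂ : List A) := hin
          obtain ⟨rfl, -⟩ : a = a₂ ∧ st.map Prod.fst = st₂.map Prod.fst := by
            simpa using hst
          rw [hx] at hrel
          simp only [List.head?] at hrel
          rw [hrel₂] at hrel
          simp at hrel
        | pop hrel₂ hδ₂ =>
          rename_i st₂ p₂ q₂ r₂ a₂ x₂
          have hx : x = x₂ := hin
          subst hx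
          obtain ⟨rfl, hst''⟩ : a = a₂ ∧ st.map Prod.fst = st₂.map Prod.fst := by
            simpa using hst
          obtain ⟨ms', hex, hm1, hm2⟩ := ih h₂' rfl hst'' hin' hst'
          refine ⟨.pop (q, q₂) (p, p₂) (r, r₂) :: ms', ?_, by simp [hm1, mproj₁],
            by simp [hm2, mproj₂]⟩
          exact .cons (Exec.pop hrel ⟨hδ, hδ₂⟩) hex

/-! ### Determinization of OPAs -/

theorem topSym_cons {Q : Type} (a : A) (p : Q) (st : List (A × Q)) :
    topSym ((a, p) :: st) = some a := rfl

variable (T : OPA A)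

def initSet : Set (T.Q × T.Q) := {pr | pr.1 = pr.2 ∧ pr.1 ∈ T.I}

def pushSet (S : Set (T.Q × T.Q)) (b : A) : Set (T.Q × T.Q) :=
  {pr | ∃ p, (p, pr.1) ∈ S ∧ (pr.1, b, pr.2) ∈ T.δpush}

def shiftSet (S : Set (T.Q × T.Q)) (b : A) : Set (T.Q × T.Q) :=
  {pr | ∃ q, (pr.1, q) ∈ S ∧ (q, b, pr.2) ∈ T.δshift}

def popSet (S P : Set (T.Q × T.Q)) : Set (T.Q × T.Q) :=
  {pr | ∃ p q, (pr.1, p) ∈ P ∧ (p, q) ∈ S ∧ (q, p, pr.2) ∈ T.δpop}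

/-- The deterministic subset (pair) automaton of an OPA. -/
@[reducible]
noncomputable def detOPA : OPA A where
  Q := Set (T.Q × T.Q)
  fin := by
    haveI := T.fin
    exact Fintype.ofFinite _
  I := {S | S = initSet T}
  F := {S | ∃ pr ∈ S, pr.2 ∈ T.F}
  δpush := {t | t.2.2 = pushSet T t.1 t.2.1}
  δshift := {t | t.2.2 = shiftSet T t.1 t.2.1}
  δpop := {t | t.2.2 = popSet T t.1 t.2.1}

variable {T}

/-- The deterministic automaton has at most one move from any configuration. -/
theorem det_step_unique {M : OPM A} {c c₁ c₂ : Config A (detOPA T).Q}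
    {m₁ m₂ : Move A (detOPA T).Q} (h₁ : Exec M (detOPA T) c m₁ c₁)
    (h₂ : Exec M (detOPA T) c m₂ c₂) : m₁ = m₂ ∧ c₁ = c₂ := by
  cases h₁ with
  | push hrel hδ =>
    cases h₂ with
    | push hrel₂ hδ₂ =>
      simp only [detOPA, Set.mem_setOf_eq] at hδ hδ₂
      subst hδ; subst hδ₂; exact ⟨rfl, rfl⟩
    | shift hrel₂ hδ₂ =>
      rw [topSym_cons, hrel₂] at hrel; simp at hrel
    | pop hrel₂ hδ₂ =>
      rw [topSym_cons] at hrel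
      simp only [List.head?] at hrel₂
      rw [hrel₂] at hrel; simp at hrel
  | shift hrel hδ =>
    cases h₂ with
    | push hrel₂ hδ₂ =>
      rw [topSym_cons, hrel] at hrel₂; simp at hrel₂
    | shift hrel₂ hδ₂ =>
      simp only [detOPA, Set.mem_setOf_eq] at hδ hδ₂
      subst hδ; subst hδ₂; exact ⟨rfl, rfl⟩
    | pop hrel₂ hδ₂ =>
      simp only [List.head?] at hrel₂
      rw [hrel₂] at hrel; simp at hrel
  | pop hrel hδ =>
    cases h₂ with
    | push hrel₂ hδ₂ =>
      rw [topSym_cons] at hrel₂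
      simp only [List.head?] at hrel
      rw [hrel] at hrel₂; simp at hrel₂
    | shift hrel₂ hδ₂ =>
      simp only [List.head?] at hrel
      rw [hrel₂] at hrel; simp at hrel
    | pop hrel₂ hδ₂ =>
      simp only [detOPA, Set.mem_setOf_eq] at hδ hδ₂
      subst hδ; subst hδ₂; exact ⟨rfl, rfl⟩

/-- From a configuration with empty stack and empty input no move is possible. -/
theorem no_exec_final {M : OPM A} {T' : OPA A} {q : T'.Q} {m : Move A T'.Q}
    {c : Config A T'.Q} (h : Exec M T' ⟨[], q, []⟩ m c) : False := by
  cases h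

/-- Runs of the deterministic automaton from a common configuration to accepting-shaped
configurations are unique. -/
theorem det_run_unique' {M : OPM A} {c d₁ d₂ : Config A (detOPA T).Q}
    {ms₁ : List (Move A (detOPA T).Q)}
    (h₁ : ExecList M (detOPA T) c ms₁ d₁) :
    ∀ {ms₂ : List (Move A (detOPA T).Q)}, ExecList M (detOPA T) c ms₂ d₂ →
      d₁.stack = [] → d₁.input = [] → d₂.stack = [] → d₂.input = [] →
      ms₁ = ms₂ ∧ d₁ = d₂ := by
  induction h₁ with
  | nil c =>
    intro ms₂ h₂ hs₁ hi₁ hs₂ hi₂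
    cases h₂ with
    | nil => exact ⟨rfl, rfl⟩
    | cons hstep _ => cases hstep <;> simp_all
  | cons hstep h' ih =>
    intro ms₂ h₂ hs₁ hi₁ hs₂ hi₂
    cases h₂ with
    | nil => cases hstep <;> simp_all
    | cons hstep₂ h₂' =>
      obtain ⟨rfl, rfl⟩ := det_step_unique hstep hstep₂
      obtain ⟨rfl, rfl⟩ := ih h₂' hs₁ hi₁ hs₂ hi₂
      exact ⟨rfl, rfl⟩

theorem det_run_unique {M : OPM A} {c : Config A (detOPA T).Q}
    {ms₁ ms₂ : List (Move A (detOPA T).Q)} {f₁ f₂ : (detOPA T).Q}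
    (h₁ : ExecList M (detOPA T) c ms₁ ⟨[], f₁, []⟩)
    (h₂ : ExecList M (detOPA T) c ms₂ ⟨[], f₂, []⟩) : ms₁ = ms₂ ∧ f₁ = f₂ := by
  obtain ⟨h, h'⟩ := det_run_unique' h₁ h₂ rfl rfl rfl rfl
  exact ⟨h, congrArg Config.state h'⟩

/-! ### Forward simulation: `T` to `detOPA T` -/

/-- The relation between a `T`-stack and a `detOPA T`-stack tracking one run. -/
def StackRel (r₀ : T.Q) : T.Q → List (A × T.Q) → Set (T.Q × T.Q) →
    List (A × Set (T.Q × T.Q)) → Prop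
  | q, [], S, [] => (r₀, q) ∈ S
  | q, (a, p) :: st, S, (a', P) :: stD => a = a' ∧ (p, q) ∈ S ∧ StackRel r₀ p st P stD
  | _, _, _, _ => False

theorem StackRel.topSym_eq {r₀ q : T.Q} {st : List (A × T.Q)} {S : Set (T.Q × T.Q)}
    {stD : List (A × Set (T.Q × T.Q))} (h : StackRel r₀ q st S stD) :
    topSym st = topSym stD := by
  match st, stD with
  | [], [] => rfl
  | (a, p) :: st, (a', P) :: stD => obtain ⟨rfl, -, -⟩ := h; rfl
  | [], _ :: _ => exact absurd h (by simp [StackRel])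
  | _ :: _, [] => exact absurd h (by simp [StackRel])

theorem StackRel.exists_mem {r₀ q : T.Q} {st : List (A × T.Q)} {S : Set (T.Q × T.Q)}
    {stD : List (A × Set (T.Q × T.Q))} (h : StackRel r₀ q st S stD) :
    ∃ p, (p, q) ∈ S := by
  match st, stD with
  | [], [] => exact ⟨r₀, h⟩
  | (a, p) :: st, (a', P) :: stD => exact ⟨p, h.2.1⟩
  | [], _ :: _ => exact absurd h (by simp [StackRel])
  | _ :: _, [] => exact absurd h (by simp [StackRel])

theorem fwd_step {M : OPM A} {r₀ : T.Q} {c c' : Config A T.Q} {m : Move A T.Q}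
    (h : Exec M T c m c') (stD : List (A × Set (T.Q × T.Q))) (S : Set (T.Q × T.Q))
    (hsr : StackRel r₀ c.state c.stack S stD) :
    ∃ m' stD' S', Exec M (detOPA T) ⟨stD, S, c.input⟩ m' ⟨stD', S', c'.input⟩ ∧
      StackRel r₀ c'.state c'.stack S' stD' := by
  cases h with
  | push hrel hδ =>
    rename_i st q r b x
    refine ⟨.push S b (pushSet T S b), (b, S) :: stD, pushSet T S b, ?_, ?_⟩
    · refine Exec.push ?_ rfl
      rwa [← StackRel.topSym_eq hsr]
    · obtain ⟨p, hp⟩ := StackRel.exists_mem hsr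
      exact ⟨rfl, ⟨p, hp, hδ⟩, hsr⟩
  | shift hrel hδ =>
    rename_i st p q r a b x
    match stD, hsr with
    | [], hF => exact absurd hF (by simp [StackRel])
    | (a', P) :: stD', hsr =>
      obtain ⟨rfl, hpq, htail⟩ := hsr
      exact ⟨.shift S b (shiftSet T S b), (b, P) :: stD', shiftSet T S b,
        Exec.shift hrel rfl, rfl, ⟨q, hpq, hδ⟩, htail⟩
  | pop hrel hδ =>
    rename_i st p q r a x
    match stD, hsr with
    | [], hF => exact absurd hF (by simp [StackRel])
    | (a', P) :: stD', hsr =>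
      obtain ⟨rfl, hpq, htail⟩ := hsr
      refine ⟨.pop S P (popSet T S P), stD', popSet T S P, Exec.pop hrel rfl, ?_⟩
      match st, stD', htail with
      | [], [], hP => exact ⟨p, q, hP, hpq, hδ⟩
      | (a₂, p₂) :: st₂, (a₂', P₂) :: stD₂, htail =>
        obtain ⟨rfl, hP, htail₂⟩ := htail
        exact ⟨rfl, ⟨p, q, hP, hpq, hδ⟩, htail₂⟩
      | [], _ :: _, hF => exact absurd hF (by simp [StackRel])
      | _ :: _, [], hF => exact absurd hF (by simp [StackRel])

theorem fwd_run {M : OPM A} {r₀ : T.Q} {c c' : Config A T.Q} {ms : List (Move A T.Q)}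
    (h : ExecList M T c ms c') :
    ∀ (stD : List (A × Set (T.Q × T.Q))) (S : Set (T.Q × T.Q)),
      StackRel r₀ c.state c.stack S stD →
      ∃ msD stD' S', ExecList M (detOPA T) ⟨stD, S, c.input⟩ msD ⟨stD', S', c'.input⟩ ∧
        StackRel r₀ c'.state c'.stack S' stD' := by
  induction h with
  | nil c => exact fun stD S hsr => ⟨[], stD, S, .nil _, hsr⟩
  | cons hstep h' ih =>
    intro stD S hsr
    obtain ⟨m', stD', S', hex, hsr'⟩ := fwd_step hstep stD S hsr
    obtain ⟨msD, stD'', S'', hex', hsr''⟩ := ih stD' S' hsr'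
    exact ⟨m' :: msD, stD'', S'', .cons hex hex', hsr''⟩

theorem accepts_det_of_accepts {M : OPM A} {w : List A} (h : Accepts M T w) :
    Accepts M (detOPA T) w := by
  obtain ⟨qI, ms, qF, hI, hF, hrun⟩ := h
  obtain ⟨msD, stD', S', hex, hsr⟩ :=
    fwd_run (r₀ := qI) hrun [] (initSet T) ⟨rfl, hI⟩
  match stD', hsr with
  | [], hmem =>
    exact ⟨initSet T, msD, S', rfl, ⟨(qI, qF), hmem, hF⟩, hex⟩
  | _ :: _, hF' => exact absurd hF' (by simp [StackRel])

/-! ### Backward simulation: `detOPA T` to `T` -/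

/-- Every pair in the sets of a reachable configuration of the deterministic automaton
is realized by an actual run fragment of `T`. -/
def Inv (M : OPM A) (w : List A) : List A → Set (T.Q × T.Q) →
    List (A × Set (T.Q × T.Q)) → Prop
  | u, S, [] => ∀ p q, (p, q) ∈ S → p ∈ T.I ∧
      ∃ ms, ExecList M T ⟨[], p, w⟩ ms ⟨[], q, u⟩
  | u, S, (a, P) :: stD => ∃ v, Inv M w v P stD ∧
      ∀ p q, (p, q) ∈ S → ∀ σ : List (A × T.Q), σ.map Prod.fst = stD.map Prod.fst →
        ∃ ms, ExecList M T ⟨σ, p, v⟩ ms ⟨(a, p) :: σ, q, u⟩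

theorem inv_step {M : OPM A} {w : List A} {c c' : Config A (detOPA T).Q}
    {m : Move A (detOPA T).Q} (h : Exec M (detOPA T) c m c')
    (hinv : Inv M w c.input c.state c.stack) : Inv M w c'.input c'.state c'.stack := by
  cases h with
  | push hrel hδ =>
    rename_i stD S S' b x
    have hS' : S' = pushSet T S b := hδ
    subst hS'
    refine ⟨b :: x, hinv, ?_⟩
    rintro q r ⟨p, hpq, hδpush⟩ σ hσ
    refine ⟨[.push q b r], .cons (Exec.push ?_ hδpush) (.nil _)⟩
    rwa [topSym_eq, hσ, ← topSym_eq]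
  | shift hrel hδ =>
    rename_i stD P S S' a b x
    have hS' : S' = shiftSet T S b := hδ
    subst hS'
    obtain ⟨v, hP, hreal⟩ := hinv
    refine ⟨v, hP, ?_⟩
    rintro p r ⟨q, hpq, hδshift⟩ σ hσ
    obtain ⟨ms, hex⟩ := hreal p q hpq σ hσ
    exact ⟨ms ++ [.shift q b r],
      execList_append hex (.cons (Exec.shift hrel hδshift) (.nil _))⟩
  | pop hrel hδ =>
    rename_i stD P S S' a x
    have hS' : S' = popSet T S P := hδ
    subst hS'
    obtain ⟨v, hP, hreal⟩ := hinv
    match stD, hP with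
    | [], hP =>
      rintro p'' r ⟨p, q, hpP, hpqS, hδpop⟩
      obtain ⟨hI, ms₀, hex₀⟩ := hP p'' p hpP
      obtain ⟨ms₁, hex₁⟩ := hreal p q hpqS [] rfl
      refine ⟨hI, ms₀ ++ (ms₁ ++ [.pop q p r]), execList_append hex₀
        (execList_append hex₁ (.cons (Exec.pop hrel hδpop) (.nil _)))⟩
    | (a₂, P₂) :: stD₂, hP =>
      obtain ⟨v₂, hP₂, hrealP⟩ := hP
      refine ⟨v₂, hP₂, ?_⟩
      rintro p'' r ⟨p, q, hpP, hpqS, hδpop⟩ σ₂ hσ₂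
      obtain ⟨ms₁, hex₁⟩ := hrealP p'' p hpP σ₂ hσ₂
      obtain ⟨ms₂, hex₂⟩ := hreal p q hpqS ((a₂, p'') :: σ₂) (by simp [hσ₂])
      exact ⟨ms₁ ++ (ms₂ ++ [.pop q p r]), execList_append hex₁
        (execList_append hex₂ (.cons (Exec.pop hrel hδpop) (.nil _)))⟩

theorem inv_run {M : OPM A} {w : List A} {c c' : Config A (detOPA T).Q}
    {ms : List (Move A (detOPA T).Q)} (h : ExecList M (detOPA T) c ms c')
    (hinv : Inv M w c.input c.state c.stack) : Inv M w c'.input c'.state c'.stack := by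
  induction h with
  | nil => exact hinv
  | cons hstep _ ih => exact ih (inv_step hstep hinv)

theorem accepts_of_accepts_det {M : OPM A} {w : List A}
    (h : Accepts M (detOPA T) w) : Accepts M T w := by
  obtain ⟨SI, msD, SF, hI, hF, hrun⟩ := h
  have hSI : SI = initSet T := hI
  subst hSI
  have hinv0 : Inv M w w (initSet T) ([] : List (A × Set (T.Q × T.Q))) := by
    rintro p q ⟨h1, h2⟩
    exact ⟨(show p = q from h1) ▸ h2, [], (show p = q from h1) ▸ .nil _⟩
  have hinv := inv_run hrun hinv0
  obtain ⟨⟨p, q⟩, hmem, hqF⟩ := hF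
  obtain ⟨hpI, ms, hex⟩ := hinv p q hmem
  exact ⟨p, ms, q, hpI, hqF, hex⟩

/-! ### The weighted product -/

/-- Product of a weighted OPA with an unweighted one; the weights come from the
first component. -/
noncomputable def prodW [Semiring K] (W : WOPA A K) (T₂ : OPA A) : WOPA A K where
  toOPA := prodOPA W.toOPA T₂
  wtpush t := W.wtpush (t.1.1, t.2.1, t.2.2.1)
  wtshift t := W.wtshift (t.1.1, t.2.1, t.2.2.1)
  wtpop t := W.wtpop (t.1.1, t.2.1.1, t.2.2.1)

theorem moveWt_prodW [Semiring K] (W : WOPA A K) (T₂ : OPA A) :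
    moveWt (prodW W T₂) = fun m => moveWt W (mproj₁ m) := by
  funext m; cases m <;> rfl

theorem move_eq_of_proj {Q₁ Q₂ : Type} {m m' : Move A (Q₁ × Q₂)}
    (h₁ : mproj₁ m = mproj₁ m') (h₂ : mproj₂ m = mproj₂ m') : m = m' := by
  cases m <;> cases m' <;> simp_all [mproj₁, mproj₂, Prod.ext_iff]

theorem moves_eq_of_proj {Q₁ Q₂ : Type} :
    ∀ {ms ms' : List (Move A (Q₁ × Q₂))}, ms.map mproj₁ = ms'.map mproj₁ →
      ms.map mproj₂ = ms'.map mproj₂ → ms = ms'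
  | [], [], _, _ => rfl
  | m :: ms, m' :: ms', h₁, h₂ => by
    simp only [List.map_cons, List.cons.injEq] at h₁ h₂
    rw [move_eq_of_proj h₁.1 h₂.1, moves_eq_of_proj h₁.2 h₂.2]
  | [], _ :: _, h₁, _ => by simp at h₁
  | _ :: _, [], h₁, _ => by simp at h₁

theorem behavior_prodW_of_not_accepts [Semiring K] {M : OPM A} (W : WOPA A K)
    {T : OPA A} {w : List A} (h : ¬ Accepts M T w) :
    behavior M (prodW W (detOPA T)) w = 0 := by
  have hempty : AccRuns M (prodW W (detOPA T)).toOPA w = ∅ := by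
    ext ρ
    simp only [Set.mem_empty_iff_false, iff_false]
    rintro ⟨hI, hF, hrun⟩
    exact h (accepts_of_accepts_det
      ⟨ρ.1.2, ρ.2.1.map mproj₂, ρ.2.2.2, hI.2, hF.2, execList_proj₂ hrun⟩)
  rw [behavior, hempty, finsum_mem_empty]

theorem behavior_prodW_of_accepts [Semiring K] {M : OPM A} (W : WOPA A K)
    {T : OPA A} {w : List A} (h : Accepts M T w) :
    behavior M (prodW W (detOPA T)) w = behavior M W w := by
  obtain ⟨SI, msD, SF, hID, hFD, hrunD⟩ := accepts_det_of_accepts h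
  have hbij : Set.BijOn (fun ρ : (prodOPA W.toOPA (detOPA T)).Q ×
        List (Move A (prodOPA W.toOPA (detOPA T)).Q) × (prodOPA W.toOPA (detOPA T)).Q =>
          (ρ.1.1, ρ.2.1.map mproj₁, ρ.2.2.1))
      (AccRuns M (prodW W (detOPA T)).toOPA w) (AccRuns M W.toOPA w) := by
    refine ⟨?_, ?_, ?_⟩
    · rintro ρ ⟨hI, hF, hrun⟩
      exact ⟨hI.1, hF.1, execList_proj₁ hrun⟩
    · rintro ρ ⟨hI, hF, hrun⟩ ρ' ⟨hI', hF', hrun'⟩ heq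
      simp only [Prod.mk.injEq] at heq
      obtain ⟨e1, e2, e3⟩ := heq
      have hstart : ρ.1.2 = ρ'.1.2 := by
        have h1 : ρ.1.2 = initSet T := hI.2
        have h2 : ρ'.1.2 = initSet T := hI'.2
        rw [h1, h2]
      have hD : ExecList M (detOPA T) ⟨[], ρ.1.2, w⟩ (ρ.2.1.map mproj₂)
          ⟨[], ρ.2.2.2, []⟩ := execList_proj₂ hrun
      have hD' : ExecList M (detOPA T) ⟨[], ρ.1.2, w⟩ (ρ'.2.1.map mproj₂)
          ⟨[], ρ'.2.2.2, []⟩ := hstart ▸ execList_proj₂ hrun'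
      obtain ⟨hms2, hf2⟩ := det_run_unique hD hD'
      have hms : ρ.2.1 = ρ'.2.1 := moves_eq_of_proj e2 hms2
      have h1 : ρ.1 = ρ'.1 := Prod.ext e1 hstart
      have h22 : ρ.2.2 = ρ'.2.2 := Prod.ext e3 hf2
      exact Prod.ext h1 (Prod.ext hms h22)
    · rintro ⟨qI, ms₁, qF⟩ ⟨hI, hF, hrun⟩
      have hSI : SI = initSet T := hID
      obtain ⟨ms, hex, hm1, hm2⟩ := pairing hrun hrunD rfl rfl rfl rfl
      refine ⟨((qI, SI), ms, (qF, SF)), ⟨⟨hI, hSI⟩, ⟨hF, hFD⟩, hex⟩, ?_⟩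
      simp [hm1]
  rw [behavior, behavior]
  refine finsum_mem_eq_of_bijOn _ hbij ?_
  rintro ρ -
  simp [moveWt_prodW, List.map_map, Function.comp_def]
  rfl


end Closure

/-- The intersection of a regular (resp. strictly regular) series with an OPL is
regular (resp. strictly regular). -/
theorem inter_regular {A K : Type} [Fintype A] [Semiring K] (M : OPM A)
    (S : List A → K) (L : Set (List A)) (hL : IsOPL M L) :
    (Regular M S → Regular M (interSeries S L)) ∧
    (StrictlyRegular M S → StrictlyRegular M (interSeries S L)) := by
  obtain ⟨T, hLT⟩ := hL
  have key : ∀ W : WOPA A K, (∀ w ∈ OPWords M, S w = behavior M W w) →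
      ∀ w ∈ OPWords M, interSeries S L w = behavior M (prodW W (detOPA T)) w := by
    intro W hW w hw
    by_cases hacc : Accepts M T w
    · have hwL : w ∈ L := by rw [hLT]; exact ⟨hw, hacc⟩
      rw [behavior_prodW_of_accepts W hacc, interSeries, if_pos hwL, hW w hw]
    · have hwL : w ∉ L := by rw [hLT]; rintro ⟨-, h⟩; exact hacc h
      rw [behavior_prodW_of_not_accepts W hacc, interSeries, if_neg hwL]
  constructor
  · rintro ⟨W, hW⟩
    exact ⟨prodW W (detOPA T), key W hW⟩
  · rintro ⟨W, hres, hW⟩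
    refine ⟨prodW W (detOPA T), ?_, key W hW⟩
    intro t ht
    exact hres _ ht.1

end WOP
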